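/- arXiv:2405.16452 — 2 statements merged into one kernel-verified Lean document; each statement's English description precedes it below -/
import Mathlib

section
/- Let G be a simple graph on n vertices and let T = T(G) be the graph on the same vertex set in which two distinct vertices x, y are adjacent if and only if they are joined by a path of length 2 in G. Then |E(T)| = |E(G)| − ⌊n/2⌋ holds if and only if one of the following is the case: (L1) n is even and G is a vertex-disjoint union of balanced complete bipartite graphs K_{d_i,d_i} with d_i ≥ 1 whose sizes sum appropriately (∑ d_i = n/2); (L2) n is odd and G is as in (L1) except that exactly one component is either a complete bipartite graph K_{d,d+1} or an isolated vertex. -/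
/-- A triple system: a family of 3-element subsets of the vertex type. -/
def isTripleSystem {V : Type*} (F : Finset (Finset V)) : Prop :=
  ∀ t ∈ F, t.card = 3

/-- `F` contains the configuration described by `pattern` (a list of triples on `Fin m`)
if there is an injection of `Fin m` into the vertex set mapping each triple of the
pattern to a member of `F`. -/
def containsConfig {V : Type*} [DecidableEq V] {m : ℕ}
    (F : Finset (Finset V)) (pattern : List (Finset (Fin m))) : Prop :=
  ∃ f : Fin m → V, Function.Injective f ∧ ∀ t ∈ pattern, t.image f ∈ F

/-- Configuration A: triples {1,2,4},{1,3,5},{2,3,6} on 6 vertices (0-indexed). -/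
def configA : List (Finset (Fin 6)) := [{0,1,3}, {0,2,4}, {1,2,5}]

/-- Configuration B: triples {1,2,5},{1,3,4},{2,3,4} on 5 vertices (0-indexed). -/
def configB : List (Finset (Fin 5)) := [{0,1,4}, {0,2,3}, {1,2,3}]

/-- Configuration C: triples {1,2,4},{1,3,4},{2,3,4} on 4 vertices (0-indexed). -/
def configC : List (Finset (Fin 4)) := [{0,1,3}, {0,2,3}, {1,2,3}]

/-- Configuration D: triples {1,2,3},{1,3,4},{2,3,5} on 5 vertices (0-indexed). -/
def configD : List (Finset (Fin 5)) := [{0,1,2}, {0,2,3}, {1,2,4}]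


/-- The graph T(G): two distinct vertices are adjacent iff they are joined by a path
of length 2 in G. -/
def pathTwoGraph {V : Type*} (G : SimpleGraph V) : SimpleGraph V where
  Adj x y := x ≠ y ∧ ∃ z : V, G.Adj x z ∧ G.Adj z y
  symm := by
    constructor
    rintro x y ⟨hxy, z, h1, h2⟩
    exact ⟨hxy.symm, z, h2.symm, h1.symm⟩
  loopless := by
    constructor
    rintro x ⟨h, -⟩
    exact h rfl

/-- G is the vertex-disjoint union of the complete bipartite graphs with parts A i, B i,
these components covering all vertices. -/
def isDisjointUnionCompleteBipartite {V : Type*} [DecidableEq V] {r : ℕ}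
    (G : SimpleGraph V) (A B : Fin r → Finset V) : Prop :=
  (∀ i, Disjoint (A i) (B i)) ∧
  (∀ i j, i ≠ j → Disjoint (A i ∪ B i) (A j ∪ B j)) ∧
  (∀ v : V, ∃ i, v ∈ A i ∪ B i) ∧
  (∀ x y : V, G.Adj x y ↔ ∃ i, (x ∈ A i ∧ y ∈ B i) ∨ (x ∈ B i ∧ y ∈ A i))

namespace PathTwoAux

open Finset
open scoped Classical
set_option linter.unusedSectionVars false
set_option linter.unnecessarySeqFocus false
set_option maxHeartbeats 1600000

lemma choose_id (a k : ℕ) :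
    a.choose 2 + (a + k).choose 2 + a = a * (a + k) + k.choose 2 := by
  induction a with
  | zero => simp
  | succ a ih =>
    have h1 : (a + 1).choose 2 = a.choose 1 + a.choose 2 := rfl
    have h2 : (a + 1 + k).choose 2 = (a + k).choose 1 + (a + k).choose 2 := by
      rw [show a + 1 + k = (a + k) + 1 by omega]
      rfl
    have h3 : (a + 1) * (a + 1 + k) = a * (a + k) + a + (a + k) + 1 := by ring
    rw [h1, h2, Nat.choose_one_right, Nat.choose_one_right]
    omega

variable {V : Type*} [Fintype V] [DecidableEq V]

noncomputable def eCard (G : SimpleGraph V) : ℕ := G.edgeFinset.card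
noncomputable def tCard (G : SimpleGraph V) : ℕ := (pathTwoGraph G).edgeFinset.card

def delTwo (G : SimpleGraph V) (u v : V) : SimpleGraph V where
  Adj x y := G.Adj x y ∧ x ≠ u ∧ x ≠ v ∧ y ≠ u ∧ y ≠ v
  symm := by constructor; rintro x y ⟨h, h1, h2, h3, h4⟩; exact ⟨h.symm, h3, h4, h1, h2⟩
  loopless := by constructor; rintro x ⟨h, -⟩; exact G.loopless.irrefl x h

lemma eCard_delTwo (G : SimpleGraph V) {u v : V} (huv : G.Adj u v) :
    eCard G + 1 = eCard (delTwo G u v) + G.degree u + G.degree v := by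
  classical
  have hne : u ≠ v := huv.ne
  have hdel : (delTwo G u v).edgeFinset
      = G.edgeFinset.filter (fun e => ¬ (u ∈ e ∨ v ∈ e)) := by
    ext e
    induction e with
    | _ x y =>
      rw [SimpleGraph.mem_edgeFinset, mem_filter, SimpleGraph.mem_edgeFinset]
      simp only [SimpleGraph.mem_edgeFinset, mem_filter, SimpleGraph.mem_edgeSet,
        Sym2.mem_iff, delTwo]
      constructor
      · rintro ⟨h, h1, h2, h3, h4⟩
        exact ⟨h, by push_neg; exact ⟨⟨fun e => h1 e.symm, fun e => h3 e.symm⟩,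
          ⟨fun e => h2 e.symm, fun e => h4 e.symm⟩⟩⟩
      · rintro ⟨h, h2⟩
        push_neg at h2
        exact ⟨h, fun e => h2.1.1 e.symm, fun e => h2.2.1 e.symm,
          fun e => h2.1.2 e.symm, fun e => h2.2.2 e.symm⟩
  have hfilt : G.edgeFinset.filter (fun e => (u ∈ e ∨ v ∈ e))
      = G.incidenceFinset u ∪ G.incidenceFinset v := by
    ext e
    simp only [mem_filter, mem_union, SimpleGraph.mem_incidenceFinset,
      SimpleGraph.incidenceSet, Set.mem_setOf_eq, SimpleGraph.mem_edgeFinset]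
    constructor
    · rintro ⟨he, h | h⟩
      · exact Or.inl ⟨he, h⟩
      · exact Or.inr ⟨he, h⟩
    · rintro (⟨he, h⟩ | ⟨he, h⟩)
      · exact ⟨he, Or.inl h⟩
      · exact ⟨he, Or.inr h⟩
  have hinter : G.incidenceFinset u ∩ G.incidenceFinset v = {s(u,v)} := by
    ext e
    simp only [mem_inter, SimpleGraph.mem_incidenceFinset, SimpleGraph.incidenceSet,
      Set.mem_setOf_eq, mem_singleton]
    constructor
    · rintro ⟨⟨_, hu⟩, ⟨_, hv⟩⟩
      exact (Sym2.mem_and_mem_iff hne).1 ⟨hu, hv⟩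
    · rintro rfl
      exact ⟨⟨huv, Sym2.mem_mk_left u v⟩, ⟨huv, Sym2.mem_mk_right u v⟩⟩
  have hcard := Finset.card_filter_add_card_filter_not
    (s := G.edgeFinset) (p := fun e => (u ∈ e ∨ v ∈ e))
  have hcu := Finset.card_union_add_card_inter (G.incidenceFinset u) (G.incidenceFinset v)
  rw [hinter, card_singleton, G.card_incidenceFinset_eq_degree,
    G.card_incidenceFinset_eq_degree] at hcu
  rw [hfilt] at hcard
  unfold eCard
  rw [hdel]
  omega

/-- The witness set of T(G)-edges. -/
noncomputable def lowerSet (G : SimpleGraph V) (u v : V) : Finset (Sym2 V) :=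
  (pathTwoGraph (delTwo G u v)).edgeFinset
    ∪ ((G.neighborFinset v).erase u).image (fun x => s(u, x))
    ∪ ((G.neighborFinset u).erase v).image (fun x => s(v, x))

lemma lowerSet_subset (G : SimpleGraph V) {u v : V} (huv : G.Adj u v) :
    lowerSet G u v ⊆ (pathTwoGraph G).edgeFinset := by
  intro e he
  simp only [lowerSet, mem_union, mem_image, mem_erase, SimpleGraph.mem_neighborFinset] at he
  rcases he with (he | ⟨x, ⟨hxu, hvx⟩, rfl⟩) | ⟨x, ⟨hxv, hux⟩, rfl⟩
  · rw [SimpleGraph.mem_edgeFinset] at he ⊢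
    revert he
    refine Sym2.ind (fun x y => ?_) e
    rintro ⟨hxy, z, h1, h2⟩
    exact ⟨hxy, z, h1.1, h2.1⟩
  · exact SimpleGraph.mem_edgeFinset.2 ⟨Ne.symm hxu, v, huv, hvx⟩
  · exact SimpleGraph.mem_edgeFinset.2 ⟨Ne.symm hxv, u, huv.symm, hux⟩

lemma pathTwo_delTwo_avoid {G : SimpleGraph V} {u v : V} {e : Sym2 V}
    (he : e ∈ (pathTwoGraph (delTwo G u v)).edgeFinset) : u ∉ e ∧ v ∉ e := by
  revert he
  refine Sym2.ind (fun x y => ?_) e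
  rintro hxy
  rw [SimpleGraph.mem_edgeFinset] at hxy
  obtain ⟨hne, z, h1, h2⟩ := hxy
  simp only [Sym2.mem_iff]
  push_neg
  exact ⟨⟨fun h => h1.2.1 h.symm, fun h => h2.2.2.2.1 h.symm⟩,
    ⟨fun h => h1.2.2.1 h.symm, fun h => h2.2.2.2.2 h.symm⟩⟩

lemma lowerSet_card (G : SimpleGraph V) {u v : V} (huv : G.Adj u v) :
    (lowerSet G u v).card + 2 = tCard (delTwo G u v) + G.degree u + G.degree v := by
  classical
  have hne : u ≠ v := huv.ne
  have hinj1 : Set.InjOn (fun x => s(u, x)) ((G.neighborFinset v).erase u) := by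
    intro a ha b hb hab
    simp only [Sym2.eq, Sym2.rel_iff', Prod.mk.injEq, Prod.swap_prod_mk] at hab
    rcases hab with ⟨-, h⟩ | ⟨h, -⟩
    · exact h
    · exact absurd h.symm (mem_erase.1 hb).1
  have hinj2 : Set.InjOn (fun x => s(v, x)) ((G.neighborFinset u).erase v) := by
    intro a ha b hb hab
    simp only [Sym2.eq, Sym2.rel_iff', Prod.mk.injEq, Prod.swap_prod_mk] at hab
    rcases hab with ⟨-, h⟩ | ⟨h, -⟩
    · exact h
    · exact absurd h.symm (mem_erase.1 hb).1
  have hc1 : (((G.neighborFinset v).erase u).image (fun x => s(u, x))).card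
      = G.degree v - 1 := by
    rw [Finset.card_image_of_injOn hinj1, Finset.card_erase_of_mem
      (by simpa using huv.symm), SimpleGraph.card_neighborFinset_eq_degree]
  have hc2 : (((G.neighborFinset u).erase v).image (fun x => s(v, x))).card
      = G.degree u - 1 := by
    rw [Finset.card_image_of_injOn hinj2, Finset.card_erase_of_mem
      (by simpa using huv), SimpleGraph.card_neighborFinset_eq_degree]
  have hd1 : Disjoint ((pathTwoGraph (delTwo G u v)).edgeFinset)
      (((G.neighborFinset v).erase u).image (fun x => s(u, x))) := by
    rw [Finset.disjoint_right]
    rintro e he hed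
    simp only [mem_image] at he
    obtain ⟨x, -, rfl⟩ := he
    exact (pathTwo_delTwo_avoid hed).1 (Sym2.mem_mk_left u x)
  have hd2 : Disjoint ((pathTwoGraph (delTwo G u v)).edgeFinset
      ∪ ((G.neighborFinset v).erase u).image (fun x => s(u, x)))
      (((G.neighborFinset u).erase v).image (fun x => s(v, x))) := by
    rw [Finset.disjoint_right]
    rintro e he hed
    simp only [mem_image, mem_erase, SimpleGraph.mem_neighborFinset] at he
    obtain ⟨x, ⟨hxv, hux⟩, rfl⟩ := he
    rcases Finset.mem_union.1 hed with hed | hed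
    · exact (pathTwo_delTwo_avoid hed).2 (Sym2.mem_mk_left v x)
    · simp only [mem_image, mem_erase, SimpleGraph.mem_neighborFinset] at hed
      obtain ⟨y, ⟨hyu, hvy⟩, hee⟩ := hed
      simp only [Sym2.eq, Sym2.rel_iff', Prod.mk.injEq, Prod.swap_prod_mk] at hee
      rcases hee with ⟨h, -⟩ | ⟨h, h'⟩
      · exact hne h
      · exact G.loopless.irrefl x (h ▸ hux)
  have hdu : 1 ≤ G.degree u := by
    rw [← SimpleGraph.card_neighborFinset_eq_degree]
    exact Finset.card_pos.2 ⟨v, by simpa using huv⟩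
  have hdv : 1 ≤ G.degree v := by
    rw [← SimpleGraph.card_neighborFinset_eq_degree]
    exact Finset.card_pos.2 ⟨u, by simpa using huv.symm⟩
  unfold lowerSet
  rw [Finset.card_union_of_disjoint hd2, Finset.card_union_of_disjoint hd1, hc1, hc2]
  unfold tCard
  omega

lemma tCard_delTwo_le (G : SimpleGraph V) {u v : V} (huv : G.Adj u v) :
    tCard (delTwo G u v) + G.degree u + G.degree v ≤ tCard G + 2 := by
  have h1 := lowerSet_card G huv
  have h2 : (lowerSet G u v).card ≤ tCard G :=
    Finset.card_le_card (lowerSet_subset G huv)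
  omega

lemma main_ineq : ∀ (m : ℕ) (s : Finset V) (G : SimpleGraph V), s.card ≤ m →
    (∀ x y, G.Adj x y → x ∈ s) → eCard G ≤ tCard G + s.card / 2 := by
  intro m
  induction m with
  | zero =>
    intro s G hs hsupp
    have : G.edgeFinset = ∅ := by
      rw [Finset.eq_empty_iff_forall_notMem]
      intro e he
      rw [SimpleGraph.mem_edgeFinset] at he
      revert he
      refine Sym2.ind (fun x y hxy => ?_) e
      have := hsupp x y hxy
      rw [Finset.card_eq_zero.1 (Nat.le_zero.1 hs)] at this
      exact absurd this (Finset.notMem_empty x)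
    simp [eCard, this]
  | succ m ih =>
    intro s G hs hsupp
    by_cases hE : G.edgeFinset = ∅
    · simp [eCard, hE]
    · obtain ⟨e, he⟩ := Finset.nonempty_iff_ne_empty.2 hE
      revert he
      refine Sym2.ind (fun u v he => ?_) e
      rw [SimpleGraph.mem_edgeFinset, SimpleGraph.mem_edgeSet] at he
      have hu : u ∈ s := hsupp u v he
      have hv : v ∈ s := hsupp v u he.symm
      have hne : u ≠ v := he.ne
      have hs2 : 2 ≤ s.card := Finset.one_lt_card.2 ⟨u, hu, v, hv, hne⟩
      set s' := (s.erase u).erase v with hs'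
      have hvmem : v ∈ s.erase u := Finset.mem_erase.2 ⟨Ne.symm hne, hv⟩
      have hcard' : s'.card = s.card - 2 := by
        rw [hs', Finset.card_erase_of_mem hvmem, Finset.card_erase_of_mem hu]
        omega
      have hsupp' : ∀ x y, (delTwo G u v).Adj x y → x ∈ s' := by
        rintro x y ⟨hxy, h1, h2, -, -⟩
        exact Finset.mem_erase.2 ⟨h2, Finset.mem_erase.2 ⟨h1, hsupp x y hxy⟩⟩
      have hIH := ih s' (delTwo G u v) (by omega) hsupp'
      have hF1 := eCard_delTwo G he
      have hF2 := tCard_delTwo_le G he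
      have hdu : 1 ≤ G.degree u := by
        rw [← SimpleGraph.card_neighborFinset_eq_degree]
        exact Finset.card_pos.2 ⟨v, by simpa using he⟩
      have hdv : 1 ≤ G.degree v := by
        rw [← SimpleGraph.card_neighborFinset_eq_degree]
        exact Finset.card_pos.2 ⟨u, by simpa using he.symm⟩
      omega

/-- Tightness: if equality holds, then for every edge uv, the T-neighbors of u
are exactly the neighbors of v (other than u). -/
lemma tight {G : SimpleGraph V} (h : tCard G + (Fintype.card V) / 2 = eCard G)
    {u v : V} (huv : G.Adj u v) : ∀ x, (pathTwoGraph G).Adj u x → G.Adj v x := by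
  classical
  have hne : u ≠ v := huv.ne
  set s' := ((Finset.univ : Finset V).erase u).erase v with hs'
  have hvmem : v ∈ (Finset.univ : Finset V).erase u :=
    Finset.mem_erase.2 ⟨Ne.symm hne, Finset.mem_univ v⟩
  have hcard' : s'.card = Fintype.card V - 2 := by
    rw [hs', Finset.card_erase_of_mem hvmem, Finset.card_erase_of_mem (Finset.mem_univ u),
      Finset.card_univ]
    omega
  have hsupp' : ∀ x y, (delTwo G u v).Adj x y → x ∈ s' := by
    rintro x y ⟨hxy, h1, h2, -, -⟩
    exact Finset.mem_erase.2 ⟨h2, Finset.mem_erase.2 ⟨h1, Finset.mem_univ x⟩⟩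
  have hIH := main_ineq s'.card s' (delTwo G u v) le_rfl hsupp'
  have hF1 := eCard_delTwo G huv
  have hLC := lowerSet_card G huv
  have hLS : (lowerSet G u v).card ≤ tCard G :=
    Finset.card_le_card (lowerSet_subset G huv)
  have hdu : 1 ≤ G.degree u := by
    rw [← SimpleGraph.card_neighborFinset_eq_degree]
    exact Finset.card_pos.2 ⟨v, by simpa using huv⟩
  have hdv : 1 ≤ G.degree v := by
    rw [← SimpleGraph.card_neighborFinset_eq_degree]
    exact Finset.card_pos.2 ⟨u, by simpa using huv.symm⟩
  have hn2 : 2 ≤ Fintype.card V := Fintype.one_lt_card_iff.2 ⟨u, v, hne⟩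
  have heq : tCard G = (lowerSet G u v).card := by omega
  have hset : (pathTwoGraph G).edgeFinset = lowerSet G u v :=
    (Finset.eq_of_subset_of_card_le (lowerSet_subset G huv) (le_of_eq heq)).symm
  intro x hux
  have hmem : s(u, x) ∈ lowerSet G u v := by
    rw [← hset]; exact SimpleGraph.mem_edgeFinset.2 hux
  simp only [lowerSet, mem_union, mem_image, mem_erase,
    SimpleGraph.mem_neighborFinset] at hmem
  rcases hmem with (hmem | ⟨y, ⟨hyu, hvy⟩, hee⟩) | ⟨y, ⟨hyv, huy⟩, hee⟩
  · exact absurd (Sym2.mem_mk_left u x) (pathTwo_delTwo_avoid hmem).1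
  · simp only [Sym2.eq, Sym2.rel_iff', Prod.mk.injEq, Prod.swap_prod_mk] at hee
    rcases hee with ⟨-, rfl⟩ | ⟨-, h2⟩
    · exact hvy
    · exact absurd h2 hyu
  · simp only [Sym2.eq, Sym2.rel_iff', Prod.mk.injEq, Prod.swap_prod_mk] at hee
    rcases hee with ⟨h1, -⟩ | ⟨h1, h2⟩
    · exact absurd h1.symm hne
    · exact absurd (h2 ▸ huy) (G.loopless.irrefl u)

noncomputable def comp (G : SimpleGraph V) (v : V) : Finset V :=
  insert v (G.neighborFinset v ∪ (G.neighborFinset v).biUnion (fun w => G.neighborFinset w))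

lemma mem_comp_self (G : SimpleGraph V) (v : V) : v ∈ comp G v :=
  Finset.mem_insert_self v _

section Star

variable {G : SimpleGraph V}
  (hstar : ∀ u v x, G.Adj u v → (pathTwoGraph G).Adj u x → G.Adj v x)

include hstar

lemma star_step {v u w y : V} (h1 : G.Adj v u) (h2 : G.Adj u w) (h3 : G.Adj w y) :
    G.Adj v y := by
  by_cases hy : y = u
  · exact hy ▸ h1
  · exact hstar u v y h1.symm ⟨fun h => hy h.symm, w, h2, h3⟩

lemma star_biUnion {v u : V} (hu : G.Adj v u) :
    (G.neighborFinset v).biUnion (fun w => G.neighborFinset w) = G.neighborFinset u := by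
  ext w
  simp only [mem_biUnion, SimpleGraph.mem_neighborFinset]
  constructor
  · rintro ⟨a, ha, hw⟩
    exact star_step hstar hu.symm ha hw
  · intro hw
    exact ⟨u, hu, hw⟩

lemma star_nbr_eq {v u x : V} (hu : G.Adj v u) (hx : G.Adj u x) :
    G.neighborFinset x = G.neighborFinset v := by
  ext y
  simp only [SimpleGraph.mem_neighborFinset]
  constructor
  · intro hy
    exact star_step hstar hu hx hy
  · intro hy
    exact star_step hstar hx.symm hu.symm hy

lemma comp_eq_of_adj {v x : V} (hvx : G.Adj v x) : comp G x = comp G v := by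
  have h1 : comp G x = G.neighborFinset x ∪ G.neighborFinset v := by
    rw [comp, star_biUnion hstar hvx.symm]
    exact Finset.insert_eq_self.2 (Finset.mem_union_right _ (by simpa using hvx))
  have h2 : comp G v = G.neighborFinset v ∪ G.neighborFinset x := by
    rw [comp, star_biUnion hstar hvx]
    exact Finset.insert_eq_self.2 (Finset.mem_union_right _ (by simpa using hvx.symm))
  rw [h1, h2, Finset.union_comm]

lemma comp_eq_of_mem {v x : V} (h : x ∈ comp G v) : comp G x = comp G v := by
  rw [comp, Finset.mem_insert, Finset.mem_union, Finset.mem_biUnion] at h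
  rcases h with rfl | (h | ⟨a, ha, hx⟩)
  · rfl
  · exact comp_eq_of_adj hstar (by simpa using h)
  · rw [comp_eq_of_adj hstar (show G.Adj a x by simpa using hx),
      comp_eq_of_adj hstar (show G.Adj v a by simpa using ha)]

lemma star_key (v : V) : ∃ XY : Finset V × Finset V,
    (∀ x ∈ XY.1, G.neighborFinset x = XY.2) ∧
    (∀ y ∈ XY.2, G.neighborFinset y = XY.1) ∧
    (XY.1 ∪ XY.2 = comp G v) ∧ XY.2.Nonempty ∧ (XY.1.Nonempty ∨ XY.2 = {v}) := by
  by_cases h : (G.neighborFinset v).Nonempty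
  · obtain ⟨u, hu⟩ := h
    rw [SimpleGraph.mem_neighborFinset] at hu
    refine ⟨(G.neighborFinset u, G.neighborFinset v), ?_, ?_, ?_, ?_, ?_⟩
    · intro x hx
      exact star_nbr_eq hstar hu (by simpa using hx)
    · intro y hy
      exact star_nbr_eq hstar hu.symm (by simpa using hy)
    · show G.neighborFinset u ∪ G.neighborFinset v = comp G v
      rw [comp, star_biUnion hstar hu, Finset.union_comm]
      exact (Finset.insert_eq_self.2
        (Finset.mem_union_right _ (by simpa using hu.symm))).symm
    · exact ⟨u, by simpa using hu⟩
    · exact Or.inl ⟨v, by simpa using hu.symm⟩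
  · rw [Finset.not_nonempty_iff_eq_empty] at h
    refine ⟨(∅, {v}), by simp, ?_, by simp [comp, h], ⟨v, Finset.mem_singleton_self v⟩,
      Or.inr rfl⟩
    intro y hy
    rw [Finset.mem_singleton] at hy
    rw [hy, h]

lemma structure_of_star :
    ∃ (r : ℕ) (A B : Fin r → Finset V), isDisjointUnionCompleteBipartite G A B ∧
      (∀ i, (A i).card ≤ (B i).card) ∧ (∀ i, (B i).Nonempty) ∧
      (∀ i, 2 ≤ (B i).card → (A i).Nonempty) := by
  classical
  choose P h1 h2 h3 h4 h5 using star_key hstar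
  set C : Finset (Finset V) := Finset.univ.image (comp G) with hC
  set e : Fin C.card ≃ {c // c ∈ C} := (Fintype.equivFinOfCardEq (Fintype.card_coe C)).symm
    with he
  have hrep : ∀ i : Fin C.card, ∃ v : V, comp G v = (e i : Finset V) := by
    intro i
    obtain ⟨v, -, hv⟩ := Finset.mem_image.1 (e i).2
    exact ⟨v, hv⟩
  choose rep hrepc using hrep
  set X : Fin C.card → Finset V := fun i => (P (rep i)).1 with hX
  set Y : Fin C.card → Finset V := fun i => (P (rep i)).2 with hY
  have hn1 : ∀ i, ∀ x ∈ X i, G.neighborFinset x = Y i := fun i => h1 (rep i)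
  have hn2 : ∀ i, ∀ y ∈ Y i, G.neighborFinset y = X i := fun i => h2 (rep i)
  have h4' : ∀ i, (Y i).Nonempty := fun i => h4 (rep i)
  have h5' : ∀ i, (X i).Nonempty ∨ Y i = {rep i} := fun i => h5 (rep i)
  -- basic facts
  have hdisXY : ∀ i, Disjoint (X i) (Y i) := by
    intro i
    rw [Finset.disjoint_left]
    intro x hx hy
    have := hn1 i x hx
    rw [← this] at hy
    rw [SimpleGraph.mem_neighborFinset] at hy
    exact G.loopless.irrefl x hy
  have hunion : ∀ i, X i ∪ Y i = comp G (rep i) := fun i => h3 (rep i)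
  have hcompdis : ∀ i j, i ≠ j → Disjoint (X i ∪ Y i) (X j ∪ Y j) := by
    intro i j hij
    rw [Finset.disjoint_left]
    intro z hzi hzj
    rw [hunion] at hzi hzj
    have hi := comp_eq_of_mem hstar hzi
    have hj := comp_eq_of_mem hstar hzj
    apply hij
    apply e.injective
    apply Subtype.ext
    rw [← hrepc i, ← hrepc j, ← hi, ← hj]
  have hcover : ∀ v : V, ∃ i, v ∈ X i ∪ Y i := by
    intro v
    have hmem : comp G v ∈ C := Finset.mem_image.2 ⟨v, Finset.mem_univ v, rfl⟩
    refine ⟨e.symm ⟨comp G v, hmem⟩, ?_⟩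
    rw [hunion, show comp G (rep (e.symm ⟨comp G v, hmem⟩)) = comp G v from ?_]
    · exact mem_comp_self G v
    · rw [hrepc (e.symm ⟨comp G v, hmem⟩)]
      simp
  have hadj : ∀ x y : V, G.Adj x y ↔ ∃ i, (x ∈ X i ∧ y ∈ Y i) ∨ (x ∈ Y i ∧ y ∈ X i) := by
    intro x y
    constructor
    · intro hxy
      obtain ⟨i, hx⟩ := hcover x
      refine ⟨i, ?_⟩
      rcases Finset.mem_union.1 hx with hx | hx
      · left
        refine ⟨hx, ?_⟩
        rw [← hn1 i x hx, SimpleGraph.mem_neighborFinset]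
        exact hxy
      · right
        refine ⟨hx, ?_⟩
        rw [← hn2 i x hx, SimpleGraph.mem_neighborFinset]
        exact hxy
    · rintro ⟨i, ⟨hx, hy⟩ | ⟨hx, hy⟩⟩
      · have := hn1 i x hx
        rw [← SimpleGraph.mem_neighborFinset, this]
        exact hy
      · have := hn2 i x hx
        rw [← SimpleGraph.mem_neighborFinset, this]
        exact hy
  -- assemble with ordered parts
  refine ⟨C.card, fun i => if (X i).card ≤ (Y i).card then X i else Y i,
    fun i => if (X i).card ≤ (Y i).card then Y i else X i, ⟨?_, ?_, ?_, ?_⟩, ?_, ?_, ?_⟩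
  · intro i
    by_cases hci : (X i).card ≤ (Y i).card <;> simp only [hci, if_true, if_false]
    · exact hdisXY i
    · exact (hdisXY i).symm
  · intro i j hij
    have hu : ∀ k, ((if (X k).card ≤ (Y k).card then X k else Y k)
        ∪ (if (X k).card ≤ (Y k).card then Y k else X k)) = X k ∪ Y k := by
      intro k
      by_cases hck : (X k).card ≤ (Y k).card <;>
        simp only [hck, if_true, if_false, Finset.union_comm]
    rw [hu i, hu j]
    exact hcompdis i j hij
  · intro v
    obtain ⟨i, hi⟩ := hcover v
    refine ⟨i, ?_⟩
    by_cases hci : (X i).card ≤ (Y i).card <;>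
      simp only [hci, if_true, if_false, Finset.union_comm] <;>
      [exact hi; exact (Finset.union_comm (X i) (Y i)) ▸ hi]
  · intro x y
    rw [hadj x y]
    constructor <;> rintro ⟨i, hh⟩ <;> refine ⟨i, ?_⟩ <;>
      by_cases hci : (X i).card ≤ (Y i).card <;>
      simp only [hci, if_true, if_false] at hh ⊢ <;> tauto
  · intro i
    by_cases hci : (X i).card ≤ (Y i).card <;> simp only [hci, if_true, if_false] <;> omega
  · intro i
    by_cases hci : (X i).card ≤ (Y i).card <;> simp only [hci, if_true, if_false]
    · exact h4' i
    · rw [← Finset.card_pos]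
      have := (h4' i).card_pos
      omega
  · intro i
    by_cases hci : (X i).card ≤ (Y i).card <;> simp only [hci, if_true, if_false]
    · intro hcard
      rcases h5' i with h | h
      · exact h
      · rw [h] at hcard
        simp at hcard
    · intro _
      exact h4' i

end Star

section Count

variable {r : ℕ} {G : SimpleGraph V} {A B : Fin r → Finset V}
  (hd : isDisjointUnionCompleteBipartite G A B)
  (hne : ∀ i, (2 ≤ (A i).card → (B i).Nonempty) ∧ (2 ≤ (B i).card → (A i).Nonempty))

include hd

lemma count_vertices : Fintype.card V = ∑ i, ((A i).card + (B i).card) := by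
  obtain ⟨h1, h2, h3, h4⟩ := hd
  have huniv : (Finset.univ : Finset V) = Finset.univ.biUnion (fun i => A i ∪ B i) := by
    ext v
    simp only [Finset.mem_univ, true_iff, Finset.mem_biUnion]
    obtain ⟨i, hi⟩ := h3 v
    exact ⟨i, trivial, hi⟩
  rw [← Finset.card_univ, huniv, Finset.card_biUnion (fun i _ j _ hij => h2 i j hij)]
  exact Finset.sum_congr rfl fun i _ => Finset.card_union_of_disjoint (h1 i)

lemma count_edges : eCard G = ∑ i, (A i).card * (B i).card := by
  obtain ⟨h1, h2, h3, h4⟩ := hd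
  have hE : G.edgeFinset
      = Finset.univ.biUnion (fun i => ((A i) ×ˢ (B i)).image (fun p => s(p.1, p.2))) := by
    ext e
    induction e with
    | _ x y =>
      simp only [SimpleGraph.mem_edgeFinset, SimpleGraph.mem_edgeSet, Finset.mem_biUnion,
        Finset.mem_image, Finset.mem_product, Finset.mem_univ, true_and]
      constructor
      · intro hxy
        obtain ⟨i, ⟨hx, hy⟩ | ⟨hx, hy⟩⟩ := (h4 x y).1 hxy
        · exact ⟨i, (x, y), ⟨hx, hy⟩, rfl⟩
        · exact ⟨i, (y, x), ⟨hy, hx⟩, Sym2.eq_swap⟩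
      · rintro ⟨i, ⟨a, b⟩, ⟨ha, hb⟩, hab⟩
        have : G.Adj a b := (h4 a b).2 ⟨i, Or.inl ⟨ha, hb⟩⟩
        rw [Sym2.eq, Sym2.rel_iff', Prod.mk.injEq, Prod.swap_prod_mk] at hab
        rcases hab with ⟨rfl, rfl⟩ | ⟨rfl, rfl⟩
        · exact this
        · exact this.symm
  rw [eCard, hE, Finset.card_biUnion]
  · refine Finset.sum_congr rfl fun i _ => ?_
    rw [Finset.card_image_of_injOn, Finset.card_product]
    rintro ⟨a, b⟩ hab ⟨c, d⟩ hcd he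
    simp only [Finset.mem_coe, Finset.mem_product] at hab hcd
    rw [Sym2.eq, Sym2.rel_iff', Prod.mk.injEq, Prod.swap_prod_mk] at he
    rcases he with ⟨rfl, rfl⟩ | ⟨rfl, rfl⟩
    · rfl
    · exact absurd hcd.2 (Finset.disjoint_left.1 (h1 i) hab.1)
  · intro i _ j _ hij
    rw [Function.onFun, Finset.disjoint_left]
    rintro e he he'
    simp only [Finset.mem_image, Finset.mem_product] at he he'
    obtain ⟨⟨a, b⟩, ⟨ha, hb⟩, rfl⟩ := he
    obtain ⟨⟨c, d⟩, ⟨hc, hd⟩, he'⟩ := he'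
    rw [Sym2.eq, Sym2.rel_iff', Prod.mk.injEq, Prod.swap_prod_mk] at he'
    have hmem : a ∈ A j ∪ B j := by
      rcases he' with ⟨rfl, rfl⟩ | ⟨rfl, rfl⟩
      · exact Finset.mem_union_left _ hc
      · exact Finset.mem_union_right _ hd
    exact Finset.disjoint_left.1 (h2 i j hij) (Finset.mem_union_left _ ha) hmem

include hne

lemma pathTwo_adj_char {x y : V} : (pathTwoGraph G).Adj x y ↔
    x ≠ y ∧ ∃ i, (x ∈ A i ∧ y ∈ A i) ∨ (x ∈ B i ∧ y ∈ B i) := by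
  obtain ⟨h1, h2, h3, h4⟩ := hd
  constructor
  · rintro ⟨hxy, z, hxz, hzy⟩
    refine ⟨hxy, ?_⟩
    obtain ⟨i, hi⟩ := (h4 x z).1 hxz
    obtain ⟨j, hj⟩ := (h4 z y).1 hzy
    have hij : i = j := by
      by_contra hij
      have hz1 : z ∈ A i ∪ B i := by
        rcases hi with ⟨-, hz⟩ | ⟨-, hz⟩
        · exact Finset.mem_union_right _ hz
        · exact Finset.mem_union_left _ hz
      have hz2 : z ∈ A j ∪ B j := by
        rcases hj with ⟨hz, -⟩ | ⟨hz, -⟩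
        · exact Finset.mem_union_left _ hz
        · exact Finset.mem_union_right _ hz
      exact Finset.disjoint_left.1 (h2 i j hij) hz1 hz2
    subst hij
    refine ⟨i, ?_⟩
    rcases hi with ⟨hx, hz⟩ | ⟨hx, hz⟩ <;> rcases hj with ⟨hz', hy⟩ | ⟨hz', hy⟩
    · exact absurd hz' (Finset.disjoint_left.1 (h1 i).symm hz)
    · exact Or.inl ⟨hx, hy⟩
    · exact Or.inr ⟨hx, hy⟩
    · exact absurd hz' (Finset.disjoint_left.1 (h1 i) hz)
  · rintro ⟨hxy, i, ⟨hx, hy⟩ | ⟨hx, hy⟩⟩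
    · obtain ⟨z, hz⟩ := (hne i).1 (Finset.one_lt_card.2 ⟨x, hx, y, hy, hxy⟩)
      exact ⟨hxy, z, (h4 x z).2 ⟨i, Or.inl ⟨hx, hz⟩⟩, (h4 z y).2 ⟨i, Or.inr ⟨hz, hy⟩⟩⟩
    · obtain ⟨z, hz⟩ := (hne i).2 (Finset.one_lt_card.2 ⟨x, hx, y, hy, hxy⟩)
      exact ⟨hxy, z, (h4 x z).2 ⟨i, Or.inr ⟨hx, hz⟩⟩, (h4 z y).2 ⟨i, Or.inl ⟨hz, hy⟩⟩⟩

lemma count_pathTwo : tCard G = ∑ i, ((A i).card.choose 2 + (B i).card.choose 2) := by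
  have hchar := fun x y => pathTwo_adj_char (x := x) (y := y) hd hne
  obtain ⟨h1, h2, h3, h4⟩ := hd
  have hT : (pathTwoGraph G).edgeFinset
      = Finset.univ.biUnion (fun i =>
          ((A i).offDiag.image Sym2.mk.uncurry) ∪ ((B i).offDiag.image Sym2.mk.uncurry)) := by
    ext e
    induction e with
    | _ x y =>
      simp only [SimpleGraph.mem_edgeFinset, SimpleGraph.mem_edgeSet, Finset.mem_biUnion,
        Finset.mem_union, Finset.mem_image, Finset.mem_offDiag, Finset.mem_univ, true_and]
      rw [hchar x y]
      constructor
      · rintro ⟨hxy, i, ⟨hx, hy⟩ | ⟨hx, hy⟩⟩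
        · exact ⟨i, Or.inl ⟨(x, y), ⟨hx, hy, hxy⟩, rfl⟩⟩
        · exact ⟨i, Or.inr ⟨(x, y), ⟨hx, hy, hxy⟩, rfl⟩⟩
      · rintro ⟨i, ⟨⟨a, b⟩, ⟨ha, hb, hab⟩, he⟩ | ⟨⟨a, b⟩, ⟨ha, hb, hab⟩, he⟩⟩ <;>
          rw [show Sym2.mk.uncurry (a, b) = s(a, b) from rfl, Sym2.eq, Sym2.rel_iff',
            Prod.mk.injEq, Prod.swap_prod_mk] at he
        · rcases he with ⟨rfl, rfl⟩ | ⟨rfl, rfl⟩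
          · exact ⟨hab, i, Or.inl ⟨ha, hb⟩⟩
          · exact ⟨Ne.symm hab, i, Or.inl ⟨hb, ha⟩⟩
        · rcases he with ⟨rfl, rfl⟩ | ⟨rfl, rfl⟩
          · exact ⟨hab, i, Or.inr ⟨ha, hb⟩⟩
          · exact ⟨Ne.symm hab, i, Or.inr ⟨hb, ha⟩⟩
  have hend : ∀ (s : Finset V) (e : Sym2 V), e ∈ s.offDiag.image Sym2.mk.uncurry →
      ∀ x ∈ e, x ∈ s := by
    intro s e he x hx
    simp only [Finset.mem_image, Finset.mem_offDiag] at he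
    obtain ⟨⟨a, b⟩, ⟨ha, hb, -⟩, rfl⟩ := he
    rcases Sym2.mem_iff.1 hx with rfl | rfl
    · exact ha
    · exact hb
  have hpt : ∀ e : Sym2 V, ∃ x, x ∈ e :=
    fun e => Sym2.ind (fun a b => ⟨a, Sym2.mem_mk_left a b⟩) e
  rw [tCard, hT, Finset.card_biUnion]
  · refine Finset.sum_congr rfl fun i _ => ?_
    rw [Finset.card_union_of_disjoint, Sym2.card_image_offDiag, Sym2.card_image_offDiag]
    rw [Finset.disjoint_left]
    intro e heA heB
    obtain ⟨x, hx⟩ := hpt e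
    exact Finset.disjoint_left.1 (h1 i) (hend _ _ heA x hx) (hend _ _ heB x hx)
  · intro i _ j _ hij
    rw [Function.onFun, Finset.disjoint_left]
    intro e hei hej
    obtain ⟨x, hx⟩ := hpt e
    have hxi : x ∈ A i ∪ B i := by
      rcases Finset.mem_union.1 hei with h | h
      · exact Finset.mem_union_left _ (hend _ _ h x hx)
      · exact Finset.mem_union_right _ (hend _ _ h x hx)
    have hxj : x ∈ A j ∪ B j := by
      rcases Finset.mem_union.1 hej with h | h
      · exact Finset.mem_union_left _ (hend _ _ h x hx)
      · exact Finset.mem_union_right _ (hend _ _ h x hx)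
    exact Finset.disjoint_left.1 (h2 i j hij) hxi hxj

end Count

end PathTwoAux

/-- Equality |E(T(G))| = |E(G)| − n/2 holds iff G is a disjoint union of balanced
complete bipartite graphs (n even), or such a union with exactly one component a
K_{d,d+1} or an isolated vertex (n odd). -/
theorem pathTwo_edge_bound_eq {V : Type*} [Fintype V] [DecidableEq V] (n : ℕ)
    (hn : Fintype.card V = n) (G : SimpleGraph V) :
    (pathTwoGraph G).edgeSet.ncard + n / 2 = G.edgeSet.ncard ↔
      ((Even n ∧ ∃ (r : ℕ) (A B : Fin r → Finset V),
        isDisjointUnionCompleteBipartite G A B ∧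
        (∀ i, 1 ≤ (A i).card ∧ (A i).card = (B i).card) ∧
        ∑ i, (A i).card = n / 2) ∨
      (Odd n ∧ ∃ (r : ℕ) (A B : Fin r → Finset V) (i₀ : Fin r),
        isDisjointUnionCompleteBipartite G A B ∧
        (∀ i, i ≠ i₀ → 1 ≤ (A i).card ∧ (A i).card = (B i).card) ∧
        (B i₀).card = (A i₀).card + 1)) := by
  classical
  subst hn
  rw [show (pathTwoGraph G).edgeSet.ncard = PathTwoAux.tCard G from
      Set.ncard_eq_toFinset_card' _,
    show G.edgeSet.ncard = PathTwoAux.eCard G from Set.ncard_eq_toFinset_card' _]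
  constructor
  · -- forward direction
    intro h
    have hstar : ∀ u v x, G.Adj u v → (pathTwoGraph G).Adj u x → G.Adj v x :=
      fun u v x huv hux => PathTwoAux.tight h huv x hux
    obtain ⟨r, A, B, hd, hAB, hBne, hBA⟩ := PathTwoAux.structure_of_star hstar
    have hne : ∀ i, (2 ≤ (A i).card → (B i).Nonempty) ∧
        (2 ≤ (B i).card → (A i).Nonempty) := fun i => ⟨fun _ => hBne i, hBA i⟩
    have hv := PathTwoAux.count_vertices hd
    have he := PathTwoAux.count_edges hd
    have ht := PathTwoAux.count_pathTwo hd hne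
    set k : Fin r → ℕ := fun i => (B i).card - (A i).card with hkdef
    have hk : ∀ i, (B i).card = (A i).card + k i := by
      intro i
      have := hAB i
      simp only [hkdef]
      omega
    have hsum2 : PathTwoAux.tCard G + ∑ i, (A i).card
        = PathTwoAux.eCard G + ∑ i, (k i).choose 2 := by
      rw [he, ht, ← Finset.sum_add_distrib, ← Finset.sum_add_distrib]
      refine Finset.sum_congr rfl fun i _ => ?_
      rw [hk i]
      exact PathTwoAux.choose_id _ _
    have hv2 : Fintype.card V = 2 * (∑ i, (A i).card) + ∑ i, k i := by
      rw [hv, show (∑ i, ((A i).card + (B i).card))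
          = ∑ i, (2 * (A i).card + k i) from Finset.sum_congr rfl fun i _ => by
            rw [hk i]; ring, Finset.sum_add_distrib, ← Finset.mul_sum]
    have key : (∑ i, (k i).choose 2) = 0 ∧ (∑ i, k i) = Fintype.card V % 2 := by
      omega
    have hkle : ∀ i, k i ≤ 1 := by
      intro i
      have h0 : (k i).choose 2 = 0 :=
        (Finset.sum_eq_zero_iff).1 key.1 i (Finset.mem_univ i)
      have := Nat.choose_eq_zero_iff.1 h0
      omega
    by_cases hpar : Fintype.card V % 2 = 0
    · left
      have hs0 : ∑ i, k i = 0 := key.2.trans hpar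
      have hk0 : ∀ i, k i = 0 :=
        fun i => (Finset.sum_eq_zero_iff).1 hs0 i (Finset.mem_univ i)
      refine ⟨Nat.even_iff.2 hpar, r, A, B, hd, ?_, ?_⟩
      · intro i
        have hb := hk i
        have hb0 := hk0 i
        have := (hBne i).card_pos
        constructor <;> omega
      · omega
    · right
      have h1 : ∑ i, k i = 1 := by omega
      have hex : ∃ i₀, k i₀ ≠ 0 := by
        by_contra hall
        push_neg at hall
        rw [Finset.sum_eq_zero (fun i _ => hall i)] at h1
        exact absurd h1 (by omega)
      obtain ⟨i₀, hi₀⟩ := hex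
      have hsplit := Finset.add_sum_erase Finset.univ k (Finset.mem_univ i₀)
      have hki₀ : k i₀ = 1 := by
        have := hkle i₀
        omega
      have hrest : ∀ j, j ≠ i₀ → k j = 0 := by
        intro j hj
        have h0 : ∑ x ∈ Finset.univ.erase i₀, k x = 0 := by omega
        exact (Finset.sum_eq_zero_iff).1 h0 j (Finset.mem_erase.2 ⟨hj, Finset.mem_univ j⟩)
      refine ⟨Nat.odd_iff.2 (by omega), r, A, B, i₀, hd, ?_, by have := hk i₀; omega⟩
      intro i hi
      have hb := hk i
      have h0 := hrest i hi
      have := (hBne i).card_pos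
      constructor <;> omega
  · -- reverse direction
    rintro (⟨hev, r, A, B, hd, hbal, hsum⟩ | ⟨hodd, r, A, B, i₀, hd, hbal, hspec⟩)
    · have hne : ∀ i, (2 ≤ (A i).card → (B i).Nonempty) ∧
          (2 ≤ (B i).card → (A i).Nonempty) := by
        intro i
        obtain ⟨h1, h2⟩ := hbal i
        constructor <;> intro _ <;> rw [← Finset.card_pos] <;> omega
      have he := PathTwoAux.count_edges hd
      have ht := PathTwoAux.count_pathTwo hd hne
      have heq : PathTwoAux.tCard G + ∑ i, (A i).card = PathTwoAux.eCard G := by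
        rw [he, ht, ← Finset.sum_add_distrib]
        refine Finset.sum_congr rfl fun i _ => ?_
        rw [← (hbal i).2]
        have := PathTwoAux.choose_id (A i).card 0
        simpa using this
      omega
    · have hne : ∀ i, (2 ≤ (A i).card → (B i).Nonempty) ∧
          (2 ≤ (B i).card → (A i).Nonempty) := by
        intro i
        by_cases hi : i = i₀
        · subst hi
          constructor <;> intro hci <;> rw [← Finset.card_pos] <;> omega
        · obtain ⟨h1, h2⟩ := hbal i hi
          constructor <;> intro _ <;> rw [← Finset.card_pos] <;> omega
      have hv := PathTwoAux.count_vertices hd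
      have he := PathTwoAux.count_edges hd
      have ht := PathTwoAux.count_pathTwo hd hne
      have heq : PathTwoAux.tCard G + ∑ i, (A i).card = PathTwoAux.eCard G := by
        rw [he, ht, ← Finset.sum_add_distrib]
        refine Finset.sum_congr rfl fun i _ => ?_
        by_cases hi : i = i₀
        · subst hi
          rw [hspec]
          have := PathTwoAux.choose_id (A i).card 1
          simpa using this
        · rw [← (hbal i hi).2]
          have := PathTwoAux.choose_id (A i).card 0
          simpa using this
      have hsplitB : (B i₀).card + ∑ j ∈ Finset.univ.erase i₀, (B j).card
          = ∑ j, (B j).card := Finset.add_sum_erase _ (fun j => (B j).card)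
          (Finset.mem_univ i₀)
      have hsplitA : (A i₀).card + ∑ j ∈ Finset.univ.erase i₀, (A j).card
          = ∑ j, (A j).card := Finset.add_sum_erase _ (fun j => (A j).card)
          (Finset.mem_univ i₀)
      have h3 : ∑ j ∈ Finset.univ.erase i₀, (B j).card
          = ∑ j ∈ Finset.univ.erase i₀, (A j).card :=
        Finset.sum_congr rfl fun j hj => ((hbal j (Finset.mem_erase.1 hj).1).2).symm
      have hv2 : Fintype.card V = ∑ i, (A i).card + ∑ i, (B i).card := by
        rw [hv, Finset.sum_add_distrib]
      omega
end

section
/- Let G be a simple graph and let T = T(G) be the graph on the same vertex set in which two distinct vertices x, y are adjacent if and only if they are joined by a path of length 2 in G. Suppose {e_1, ..., e_ℓ} is a maximal matching of G, i.e. the e_i are pairwise disjoint edges of G and the set of vertices not covered by them is an independent set in G. Then |E(T)| ≥ |E(G)| − ℓ. -/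
set_option linter.unusedSectionVars false

section PathTwoAux

variable {V : Type*} [Fintype V] [DecidableEq V]

lemma pair_eq_cases {a b c d : V} (hab : a ≠ b)
    (h : ({a, b} : Finset V) = {c, d}) : (a = c ∧ b = d) ∨ (a = d ∧ b = c) := by
  have ha : a ∈ ({c, d} : Finset V) := by rw [← h]; simp
  have hb : b ∈ ({c, d} : Finset V) := by rw [← h]; simp
  have hd : d ∈ ({a, b} : Finset V) := by rw [h]; simp
  simp only [Finset.mem_insert, Finset.mem_singleton] at ha hb hd
  rcases ha with rfl | rfl
  · rcases hb with rfl | rfl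
    · exact absurd rfl hab
    · exact Or.inl ⟨rfl, rfl⟩
  · rcases hb with rfl | rfl
    · exact Or.inr ⟨rfl, rfl⟩
    · exact absurd rfl hab

/-- partner of a matched vertex -/
noncomputable def pTwoPartner (M : Finset (Finset V)) (v : V) : V :=
  if h : ∃ u, ({v, u} : Finset V) ∈ M ∧ u ≠ v then h.choose else v

variable {G : SimpleGraph V} {M : Finset (Finset V)}
variable (hedge : ∀ e ∈ M, ∃ x y : V, e = ({x, y} : Finset V) ∧ G.Adj x y)
variable (hdisj : ∀ e ∈ M, ∀ e' ∈ M, e ≠ e' → Disjoint e e')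

include hedge in
lemma matched_iff {v : V} :
    v ∈ M.biUnion id ↔ ∃ u, ({v, u} : Finset V) ∈ M ∧ u ≠ v := by
  constructor
  · intro hv
    obtain ⟨e, heM, hve⟩ := Finset.mem_biUnion.mp hv
    obtain ⟨x, y, rfl, hadj⟩ := hedge e heM
    have hxy : x ≠ y := hadj.ne
    simp only [id, Finset.mem_insert, Finset.mem_singleton] at hve
    rcases hve with rfl | rfl
    · exact ⟨y, heM, hxy.symm⟩
    · exact ⟨x, by rwa [Finset.pair_comm], hxy⟩
  · rintro ⟨u, hM, -⟩
    exact Finset.mem_biUnion.mpr ⟨_, hM, by simp⟩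

include hedge in
lemma pTwoPartner_spec {v : V} (hv : v ∈ M.biUnion id) :
    ({v, pTwoPartner M v} : Finset V) ∈ M ∧ pTwoPartner M v ≠ v := by
  have h := (matched_iff hedge).mp hv
  rw [pTwoPartner, dif_pos h]
  exact ⟨h.choose_spec.1, h.choose_spec.2⟩

include hedge hdisj in
lemma pTwoPartner_unique {v u : V} (hM : ({v, u} : Finset V) ∈ M) (huv : u ≠ v) :
    pTwoPartner M v = u := by
  have hv : v ∈ M.biUnion id := Finset.mem_biUnion.mpr ⟨_, hM, by simp⟩
  obtain ⟨hM', hne⟩ := pTwoPartner_spec hedge hv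
  by_cases heq : ({v, pTwoPartner M v} : Finset V) = {v, u}
  · rcases pair_eq_cases (Ne.symm hne) heq with ⟨-, h2⟩ | ⟨-, h2⟩
    · exact h2
    · exact absurd h2 hne
  · have := hdisj _ hM' _ hM heq
    exact absurd (show v ∈ ({v, u} : Finset V) by simp)
      (Finset.disjoint_left.mp this (by simp))

include hedge hdisj in
lemma pTwoPartner_invol {v : V} (hv : v ∈ M.biUnion id) :
    pTwoPartner M (pTwoPartner M v) = v := by
  obtain ⟨hM, hne⟩ := pTwoPartner_spec hedge hv
  exact pTwoPartner_unique hedge hdisj (by rwa [Finset.pair_comm]) hne.symm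

include hedge in
lemma pTwoPartner_matched {v : V} (hv : v ∈ M.biUnion id) :
    pTwoPartner M v ∈ M.biUnion id := by
  obtain ⟨hM, -⟩ := pTwoPartner_spec hedge hv
  exact Finset.mem_biUnion.mpr ⟨_, hM, by simp⟩

include hedge in
lemma pTwoPartner_adj {v : V} (hv : v ∈ M.biUnion id) :
    G.Adj v (pTwoPartner M v) := by
  obtain ⟨hM, hne⟩ := pTwoPartner_spec hedge hv
  obtain ⟨x, y, heq, hadj⟩ := hedge _ hM
  rcases pair_eq_cases hne.symm heq with ⟨rfl, rfl⟩ | ⟨rfl, rfl⟩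
  · exact hadj
  · exact hadj.symm

include hedge hdisj in
lemma pTwo_distinct {v w : V} (hv : v ∈ M.biUnion id) (hw : w ∈ M.biUnion id)
    (h1 : w ≠ v) (h2 : w ≠ pTwoPartner M v) :
    v ≠ pTwoPartner M w ∧ pTwoPartner M v ≠ pTwoPartner M w := by
  obtain ⟨hMv, hnev⟩ := pTwoPartner_spec hedge hv
  obtain ⟨hMw, hnew⟩ := pTwoPartner_spec hedge hw
  have hne : ({v, pTwoPartner M v} : Finset V) ≠ {w, pTwoPartner M w} := by
    intro h
    have : w ∈ ({v, pTwoPartner M v} : Finset V) := by rw [h]; simp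
    simp only [Finset.mem_insert, Finset.mem_singleton] at this
    tauto
  have hD := hdisj _ hMv _ hMw hne
  constructor
  · intro h
    exact Finset.disjoint_left.mp hD (show v ∈ _ by simp) (by simp [h])
  · intro h
    exact Finset.disjoint_left.mp hD (show pTwoPartner M v ∈ _ by simp) (by simp [h])

/-- key of a matched vertex: min index over its matching edge -/
noncomputable def pTwoKey (M : Finset (Finset V)) (v : V) : ℕ :=
  min ((Fintype.equivFin V v : ℕ)) ((Fintype.equivFin V (pTwoPartner M v) : ℕ))

include hedge hdisj in
lemma pTwoKey_partner {v : V} (hv : v ∈ M.biUnion id) :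
    pTwoKey M (pTwoPartner M v) = pTwoKey M v := by
  rw [pTwoKey, pTwoKey, pTwoPartner_invol hedge hdisj hv, min_comm]

include hedge hdisj in
lemma pTwoKey_ne {v w : V} (hv : v ∈ M.biUnion id) (hw : w ∈ M.biUnion id)
    (h1 : w ≠ v) (h2 : w ≠ pTwoPartner M v) :
    pTwoKey M v ≠ pTwoKey M w := by
  obtain ⟨h3, h4⟩ := pTwo_distinct hedge hdisj hv hw h1 h2
  have hinj : Function.Injective (fun x : V => (Fintype.equivFin V x : ℕ)) := by
    intro a b hab
    exact (Fintype.equivFin V).injective (Fin.ext hab)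
  intro h
  rw [pTwoKey, pTwoKey] at h
  rcases min_cases ((Fintype.equivFin V v : ℕ)) ((Fintype.equivFin V (pTwoPartner M v) : ℕ)) with
    ⟨hl, -⟩ | ⟨hl, -⟩ <;>
  rcases min_cases ((Fintype.equivFin V w : ℕ)) ((Fintype.equivFin V (pTwoPartner M w) : ℕ)) with
    ⟨hr, -⟩ | ⟨hr, -⟩ <;> rw [hl, hr] at h
  · exact h1 (hinj h).symm
  · exact h3 (hinj h)
  · exact h2 (hinj h).symm
  · exact h4 (hinj h)

variable (M) in
/-- the symmetric pair function underlying the injection -/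
noncomputable def pTwoG (x y : V) : Sym2 V :=
  if x ∈ M.biUnion id then
    if y ∈ M.biUnion id then
      if pTwoKey M x < pTwoKey M y then s(x, pTwoPartner M y)
      else if pTwoKey M y < pTwoKey M x then s(pTwoPartner M x, y)
      else s(x, y)
    else s(pTwoPartner M x, y)
  else s(x, pTwoPartner M y)

variable (M) in
noncomputable def pTwoF : Sym2 V → Sym2 V :=
  Sym2.lift ⟨fun x y =>
    if (Fintype.equivFin V x : ℕ) ≤ (Fintype.equivFin V y : ℕ) then pTwoG M x y
    else pTwoG M y x, by
    intro x y
    rcases le_or_gt ((Fintype.equivFin V x : ℕ)) ((Fintype.equivFin V y : ℕ)) with h | h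
    · rcases eq_or_lt_of_le h with heq | hlt
      · have : x = y := (Fintype.equivFin V).injective (Fin.ext heq)
        subst this; rfl
      · dsimp only; rw [if_pos h, if_neg (not_le.mpr hlt)]
    · dsimp only; rw [if_neg (not_le.mpr h), if_pos h.le]⟩

include hedge in
lemma not_mem_pair {x y : V} (hx : x ∈ M.biUnion id)
    (hmem : ({x, y} : Finset V) ∉ M) (hne : y ≠ x) : y ≠ pTwoPartner M x := by
  intro h
  obtain ⟨hM, -⟩ := pTwoPartner_spec hedge hx
  rw [← h] at hM
  exact hmem hM

include hedge hdisj in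
lemma pTwoG_symm {x y : V} (hadj : G.Adj x y) (hmem : ({x, y} : Finset V) ∉ M)
    (hor : x ∈ M.biUnion id ∨ y ∈ M.biUnion id) :
    pTwoG M x y = pTwoG M y x := by
  by_cases hx : x ∈ M.biUnion id <;> by_cases hy : y ∈ M.biUnion id
  · have hne : pTwoKey M x ≠ pTwoKey M y :=
      pTwoKey_ne hedge hdisj hx hy hadj.ne.symm (not_mem_pair hedge hx hmem hadj.ne.symm)
    rw [pTwoG, pTwoG]
    simp only [if_pos hx, if_pos hy]
    rcases hne.lt_or_gt with h | h
    · simp only [if_pos h, if_neg (lt_asymm h), Sym2.eq_swap]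
    · simp only [if_pos h, if_neg (lt_asymm h), Sym2.eq_swap]
  · rw [pTwoG, pTwoG]
    simp only [if_pos hx, if_neg hy, Sym2.eq_swap]
  · rw [pTwoG, pTwoG]
    simp only [if_neg hx, if_pos hy, Sym2.eq_swap]
  · tauto

include hedge hdisj in
lemma pTwoF_edge {x y : V} (hadj : G.Adj x y) (hmem : ({x, y} : Finset V) ∉ M)
    (hor : x ∈ M.biUnion id ∨ y ∈ M.biUnion id) :
    pTwoF M s(x, y) = pTwoG M x y := by
  rw [pTwoF, Sym2.lift_mk]
  dsimp only
  split
  · rfl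
  · exact (pTwoG_symm hedge hdisj hadj hmem hor).symm

include hedge hdisj in
lemma pTwoF_shape {x y : V} (hadj : G.Adj x y) (hmem : ({x, y} : Finset V) ∉ M)
    (hor : x ∈ M.biUnion id ∨ y ∈ M.biUnion id) :
    ∃ a b, s(x, y) = s(a, b) ∧ G.Adj a b ∧
      ((a ∈ M.biUnion id ∧ b ∉ M.biUnion id ∧
          pTwoF M s(x, y) = s(pTwoPartner M a, b)) ∨
       (a ∈ M.biUnion id ∧ b ∈ M.biUnion id ∧ pTwoKey M a < pTwoKey M b ∧
          pTwoF M s(x, y) = s(a, pTwoPartner M b))) := by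
  rw [pTwoF_edge hedge hdisj hadj hmem hor]
  by_cases hx : x ∈ M.biUnion id <;> by_cases hy : y ∈ M.biUnion id
  · have hne : pTwoKey M x ≠ pTwoKey M y :=
      pTwoKey_ne hedge hdisj hx hy hadj.ne.symm (not_mem_pair hedge hx hmem hadj.ne.symm)
    rcases hne.lt_or_gt with h | h
    · exact ⟨x, y, rfl, hadj, Or.inr ⟨hx, hy, h, by
        rw [pTwoG]; simp only [if_pos hx, if_pos hy, if_pos h]⟩⟩
    · exact ⟨y, x, Sym2.eq_swap, hadj.symm, Or.inr ⟨hy, hx, h, by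
        rw [pTwoG]
        simp only [if_pos hx, if_pos hy, if_pos h, if_neg (lt_asymm h), Sym2.eq_swap]⟩⟩
  · exact ⟨x, y, rfl, hadj, Or.inl ⟨hx, hy, by
      rw [pTwoG]; simp only [if_pos hx, if_neg hy]⟩⟩
  · exact ⟨y, x, Sym2.eq_swap, hadj.symm, Or.inl ⟨hy, hx, by
      rw [pTwoG]; simp only [if_neg hx, if_pos hy, Sym2.eq_swap]⟩⟩
  · tauto

include hedge hdisj in
lemma pTwoF_maps {x y : V} (hadj : G.Adj x y) (hmem : ({x, y} : Finset V) ∉ M)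
    (hor : x ∈ M.biUnion id ∨ y ∈ M.biUnion id) :
    pTwoF M s(x, y) ∈ (pathTwoGraph G).edgeSet := by
  obtain ⟨a, b, -, hab, S⟩ := pTwoF_shape hedge hdisj hadj hmem hor
  rcases S with ⟨ha, hb, heq⟩ | ⟨ha, hb, hk, heq⟩
  · rw [heq, SimpleGraph.mem_edgeSet]
    refine ⟨fun h => hb (h ▸ pTwoPartner_matched hedge ha), a,
      (pTwoPartner_adj hedge ha).symm, hab⟩
  · rw [heq, SimpleGraph.mem_edgeSet]
    refine ⟨fun h => ?_, b, hab, pTwoPartner_adj hedge hb⟩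
    rw [h] at hk
    rw [pTwoKey_partner hedge hdisj hb] at hk
    exact lt_irrefl _ hk

include hedge hdisj in
lemma pTwoF_injAux {x y u v : V}
    (h1 : G.Adj x y) (m1 : ({x, y} : Finset V) ∉ M)
    (o1 : x ∈ M.biUnion id ∨ y ∈ M.biUnion id)
    (h2 : G.Adj u v) (m2 : ({u, v} : Finset V) ∉ M)
    (o2 : u ∈ M.biUnion id ∨ v ∈ M.biUnion id)
    (heq : pTwoF M s(x, y) = pTwoF M s(u, v)) : s(x, y) = s(u, v) := by
  obtain ⟨a, b, e1, hab, S1⟩ := pTwoF_shape hedge hdisj h1 m1 o1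
  obtain ⟨c, d, e2, hcd, S2⟩ := pTwoF_shape hedge hdisj h2 m2 o2
  rw [e1, e2]
  rcases S1 with ⟨ha, hb, f1⟩ | ⟨ha, hb, k1, f1⟩ <;>
    rcases S2 with ⟨hc, hd, f2⟩ | ⟨hc, hd, k2, f2⟩ <;>
    rw [f1, f2] at heq <;> rw [Sym2.eq_iff] at heq
  · rcases heq with ⟨hpp, hbd⟩ | ⟨hpd, hbc⟩
    · have : a = c := by
        have := congrArg (pTwoPartner M) hpp
        rwa [pTwoPartner_invol hedge hdisj ha, pTwoPartner_invol hedge hdisj hc] at this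
      rw [this, hbd]
    · exact absurd (hbc ▸ pTwoPartner_matched hedge hc) hb
  · rcases heq with ⟨-, hbd⟩ | ⟨-, hbc⟩
    · exact absurd (hbd ▸ pTwoPartner_matched hedge hd) hb
    · exact absurd (hbc ▸ hc) hb
  · rcases heq with ⟨-, hpd⟩ | ⟨had, -⟩
    · exact absurd (hpd ▸ pTwoPartner_matched hedge hb) hd
    · exact absurd (had ▸ ha) hd
  · rcases heq with ⟨hac, hpp⟩ | ⟨had, hpc⟩
    · have : b = d := by
        have := congrArg (pTwoPartner M) hpp
        rwa [pTwoPartner_invol hedge hdisj hb, pTwoPartner_invol hedge hdisj hd] at this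
      rw [hac, this]
    · exfalso
      have e3 : pTwoKey M a = pTwoKey M d := by
        rw [had, pTwoKey_partner hedge hdisj hd]
      have e4 : pTwoKey M c = pTwoKey M b := by
        rw [← hpc, pTwoKey_partner hedge hdisj hb]
      omega

end PathTwoAux

/-- If {e_1, ..., e_ℓ} is a maximal matching of G (pairwise disjoint edges such that
the uncovered vertices form an independent set), then |E(T(G))| ≥ |E(G)| − ℓ. -/
theorem pathTwo_edge_bound_matching {V : Type*} [Fintype V] [DecidableEq V]
    (G : SimpleGraph V) (M : Finset (Finset V))
    (hedge : ∀ e ∈ M, ∃ x y : V, e = ({x, y} : Finset V) ∧ G.Adj x y)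
    (hdisj : ∀ e ∈ M, ∀ e' ∈ M, e ≠ e' → Disjoint e e')
    (hmax : ∀ x y : V, G.Adj x y → x ∈ M.biUnion id ∨ y ∈ M.biUnion id) :
    G.edgeSet.ncard - M.card ≤ (pathTwoGraph G).edgeSet.ncard := by
  classical
  set MP : Set (Sym2 V) := {z | ∃ x y, z = s(x, y) ∧ ({x, y} : Finset V) ∈ M} with hMP
  have memMP : ∀ x y : V, s(x, y) ∈ MP ↔ ({x, y} : Finset V) ∈ M := by
    intro x y
    constructor
    · rintro ⟨u, v, huv, hM⟩
      rw [Sym2.eq_iff] at huv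
      rcases huv with ⟨rfl, rfl⟩ | ⟨rfl, rfl⟩
      · exact hM
      · rwa [Finset.pair_comm]
    · intro h; exact ⟨x, y, rfl, h⟩
  have h1 : (G.edgeSet \ MP).ncard ≤ (pathTwoGraph G).edgeSet.ncard := by
    apply Set.ncard_le_ncard_of_injOn (pTwoF M)
    · intro z hz
      induction z using Sym2.ind with
      | _ x y =>
        have hadj : G.Adj x y := G.mem_edgeSet.mp hz.1
        have hmem : ({x, y} : Finset V) ∉ M := fun h => hz.2 ((memMP x y).mpr h)
        exact pTwoF_maps hedge hdisj hadj hmem (hmax x y hadj)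
    · intro z1 hz1 z2 hz2 heq
      induction z1 using Sym2.ind with
      | _ x y =>
        induction z2 using Sym2.ind with
        | _ u v =>
          have h1' : G.Adj x y := G.mem_edgeSet.mp hz1.1
          have m1 : ({x, y} : Finset V) ∉ M := fun h => hz1.2 ((memMP x y).mpr h)
          have h2' : G.Adj u v := G.mem_edgeSet.mp hz2.1
          have m2 : ({u, v} : Finset V) ∉ M := fun h => hz2.2 ((memMP u v).mpr h)
          exact pTwoF_injAux hedge hdisj h1' m1 (hmax x y h1') h2' m2 (hmax u v h2') heq
  have h2 : (G.edgeSet ∩ MP).ncard ≤ M.card := by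
    rw [← Set.ncard_coe_finset]
    apply Set.ncard_le_ncard_of_injOn
      (Sym2.lift ⟨fun x y => ({x, y} : Finset V), fun x y => Finset.pair_comm x y⟩)
    · intro z hz
      induction z using Sym2.ind with
      | _ x y =>
        rw [Sym2.lift_mk]
        exact Finset.mem_coe.mpr ((memMP x y).mp hz.2)
    · intro z1 hz1 z2 hz2 heq
      induction z1 using Sym2.ind with
      | _ x y =>
        induction z2 using Sym2.ind with
        | _ u v =>
          rw [Sym2.lift_mk, Sym2.lift_mk] at heq
          have hxy : x ≠ y := (G.mem_edgeSet.mp hz1.1).ne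
          rcases pair_eq_cases hxy heq with ⟨rfl, rfl⟩ | ⟨rfl, rfl⟩
          · rfl
          · exact Sym2.eq_swap
  have h3 : G.edgeSet.ncard ≤ (G.edgeSet \ MP).ncard + (G.edgeSet ∩ MP).ncard := by
    conv_lhs => rw [← Set.diff_union_inter G.edgeSet MP]
    exact Set.ncard_union_le _ _
  omega
end
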